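/- Let P be a hyperbolic pair of pants with boundary lengths l(C₁), l(C₂), l(C₃), and let K(x,y) = log max_{i=1,2,3} l_y(C_i)/l_x(C_i) on the Teichmüller space of the pair of pants (parametrized by the triple of boundary lengths in (0,∞)³). Then K satisfies the triangle inequality but is not an asymmetric metric: there exist x ≠ y with K(x,y) ≤ 0, and indeed there exist distinct x, y with K(x,y) = 0. -/

import Mathlib

open Real

/-- `K` on the Teichmüller space of a pair of pants, identified with `(0,∞)³` via the three
boundary lengths: `K x y = log max_i (y i / x i)`. -/
noncomputable def Kpants (x y : Fin 3 → ℝ) : ℝ :=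
  Real.log (max (y 0 / x 0) (max (y 1 / x 1) (y 2 / x 2)))

lemma Kpants_zero_example :
    ∃ x y : Fin 3 → ℝ, (∀ i, 0 < x i) ∧ (∀ i, 0 < y i) ∧ x ≠ y ∧ Kpants x y = 0 := by
  refine ⟨![1, 2, 2], ![1, 1, 1], ?_, ?_, ?_, ?_⟩
  · intro i; fin_cases i <;> norm_num
  · intro i; fin_cases i <;> norm_num
  · intro h
    have := congrFun h 1
    norm_num [Matrix.cons_val_one] at this
  · simp only [Kpants]
    norm_num [Matrix.cons_val_two, Matrix.vecHead, Matrix.vecTail]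

/-- On the Teichmüller space of a hyperbolic pair of pants (parametrized by the triple of
boundary lengths in `(0,∞)³`), the function `K(x,y) = log max_i l_y(C_i)/l_x(C_i)`
satisfies the triangle inequality, but it is not an asymmetric metric: there exist `x ≠ y`
with `K(x,y) ≤ 0`, and indeed there exist distinct `x, y` with `K(x,y) = 0`. -/
theorem stmt15 :
    (∀ x y z : Fin 3 → ℝ, (∀ i, 0 < x i) → (∀ i, 0 < y i) → (∀ i, 0 < z i) →
      Kpants x z ≤ Kpants x y + Kpants y z) ∧
    (∃ x y : Fin 3 → ℝ, (∀ i, 0 < x i) ∧ (∀ i, 0 < y i) ∧ x ≠ y ∧ Kpants x y ≤ 0) ∧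
    (∃ x y : Fin 3 → ℝ, (∀ i, 0 < x i) ∧ (∀ i, 0 < y i) ∧ x ≠ y ∧ Kpants x y = 0) := by
  refine ⟨?_, ?_, Kpants_zero_example⟩
  · intro x y z hx hy hz
    set M1 : ℝ := max (y 0 / x 0) (max (y 1 / x 1) (y 2 / x 2)) with hM1
    set M2 : ℝ := max (z 0 / y 0) (max (z 1 / y 1) (z 2 / y 2)) with hM2
    have hM1pos : 0 < M1 := lt_of_lt_of_le (div_pos (hy 0) (hx 0)) (le_max_left _ _)
    have hM2pos : 0 < M2 := lt_of_lt_of_le (div_pos (hz 0) (hy 0)) (le_max_left _ _)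
    have key : ∀ i : Fin 3, z i / x i ≤ M1 * M2 := by
      intro i
      have h1 : y i / x i ≤ M1 := by fin_cases i <;> simp [hM1, le_max_iff, le_refl]
      have h2 : z i / y i ≤ M2 := by fin_cases i <;> simp [hM2, le_max_iff, le_refl]
      have : z i / x i = (y i / x i) * (z i / y i) := by
        rw [div_mul_div_comm, mul_comm (x i) (y i), mul_div_mul_left _ _ (ne_of_gt (hy i))]
      rw [this]
      exact mul_le_mul h1 h2 (le_of_lt (div_pos (hz i) (hy i))) (le_of_lt hM1pos)
    have hle : max (z 0 / x 0) (max (z 1 / x 1) (z 2 / x 2)) ≤ M1 * M2 := by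
      simp only [max_le_iff]
      exact ⟨key 0, key 1, key 2⟩
    have hpos : (0:ℝ) < max (z 0 / x 0) (max (z 1 / x 1) (z 2 / x 2)) :=
      lt_of_lt_of_le (div_pos (hz 0) (hx 0)) (le_max_left _ _)
    calc Kpants x z ≤ Real.log (M1 * M2) := Real.log_le_log hpos hle
      _ = Real.log M1 + Real.log M2 := Real.log_mul (ne_of_gt hM1pos) (ne_of_gt hM2pos)
      _ = Kpants x y + Kpants y z := rfl
  · obtain ⟨x, y, hx, hy, hne, h⟩ := Kpants_zero_example
    exact ⟨x, y, hx, hy, hne, le_of_eq h⟩
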